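/- Let 0 < α < 1 and r > 0. Define the truncated Riesz potential kernel g_α^{r²}(z) := (1/Γ(α)) ∫₀^{r²} t^{α-1} (4πt)^{-1} exp(-|z|²/(4t)) dt and the full kernel G_α(z) := (1/Γ(α)) ∫₀^∞ t^{α-1} (4πt)^{-1} exp(-|z|²/(4t)) dt. Then for every z ∈ ℂ \ {0}: g_α^{r²}(z) ≤ 2^{1-α} exp(-|z|²/(8r²)) G_α(z). -/

import Mathlib

open Real MeasureTheory Complex intervalIntegral


lemma aux_integrable {α c b : ℝ} (hα0 : 0 < α) (hα1 : α < 1) (hc : 0 < c) (hb : 0 < b) :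
    IntegrableOn (fun t : ℝ => t ^ (α - 1) * ((4 * π * t)⁻¹ * Real.exp (-c / (b * t))))
      (Set.Ioi 0) := by
  have key : IntegrableOn (fun x : ℝ => (4 * π)⁻¹ * (x ^ (-α) * Real.exp (-(c / b) * x)))
      (Set.Ioi 0) := by
    refine (Integrable.const_mul ?_ _)
    have h := integrableOn_rpow_mul_exp_neg_mul_rpow (s := -α) (p := 1)
      (by linarith) one_pos (show (0:ℝ) < c / b by positivity)
    simpa [Real.rpow_one, IntegrableOn] using h
  rw [← integrableOn_Ioi_comp_rpow_iff' (p := -1)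
    (fun t : ℝ => t ^ (α - 1) * ((4 * π * t)⁻¹ * Real.exp (-c / (b * t)))) (by norm_num)]
  refine key.congr_fun (fun x hx => ?_) measurableSet_Ioi
  have hx0 : (0:ℝ) < x := hx
  rw [smul_eq_mul]
  have e1 : (x ^ (-1:ℝ)) ^ (α - 1) = x ^ (1 - α) := by
    rw [← Real.rpow_mul hx0.le]; congr 1; ring
  have e2 : x ^ (-1:ℝ) = x⁻¹ := Real.rpow_neg_one x
  have e3 : -c / (b * x⁻¹) = -(c / b) * x := by field_simp
  have e4 : (4 * π * x⁻¹)⁻¹ = (4 * π)⁻¹ * x := by rw [mul_inv, inv_inv]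
  have e5 : x ^ ((-1:ℝ) - 1) * x ^ (1 - α) * x = x ^ (-α) := by
    rw [← Real.rpow_add hx0, ← Real.rpow_add_one hx0.ne']; congr 1; ring
  beta_reduce
  rw [e1, e2, e3, e4, ← e5]; ring

lemma aux_sub {α c : ℝ} (hc : 0 < c) :
    (∫ t in Set.Ioi (0:ℝ), t ^ (α - 1) * ((4 * π * t)⁻¹ * Real.exp (-c / (8 * t)))) =
      2 ^ (1 - α) *
        ∫ t in Set.Ioi (0:ℝ), t ^ (α - 1) * ((4 * π * t)⁻¹ * Real.exp (-c / (4 * t))) := by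
  have h1 : (∫ t in Set.Ioi (0:ℝ), t ^ (α - 1) * ((4 * π * t)⁻¹ * Real.exp (-c / (8 * t)))) =
      ∫ t in Set.Ioi (0:ℝ), (2:ℝ) ^ (2 - α) *
        ((2 * t) ^ (α - 1) * ((4 * π * (2 * t))⁻¹ * Real.exp (-c / (4 * (2 * t))))) := by
    refine setIntegral_congr_fun measurableSet_Ioi (fun t ht => ?_)
    have ht0 : (0:ℝ) < t := ht
    have e1 : ((2:ℝ) * t) ^ (α - 1) = 2 ^ (α - 1) * t ^ (α - 1) :=
      Real.mul_rpow (by norm_num) ht0.le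
    have e2 : (4 * π * (2 * t))⁻¹ = 2⁻¹ * (4 * π * t)⁻¹ := by
      rw [show 4 * π * (2 * t) = 2 * (4 * π * t) by ring, mul_inv]
    have e3 : -c / (4 * (2 * t)) = -c / (8 * t) := by ring_nf
    have e4 : (2:ℝ) ^ (2 - α) * (2 ^ (α - 1) * 2⁻¹) = 1 := by
      rw [← Real.rpow_neg_one 2, ← Real.rpow_add two_pos, ← Real.rpow_add two_pos,
        show 2 - α + (α - 1 + -1) = 0 by ring, Real.rpow_zero]
    rw [e1, e2, e3]
    calc t ^ (α - 1) * ((4 * π * t)⁻¹ * Real.exp (-c / (8 * t)))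
        = ((2:ℝ) ^ (2 - α) * (2 ^ (α - 1) * 2⁻¹)) *
          (t ^ (α - 1) * ((4 * π * t)⁻¹ * Real.exp (-c / (8 * t)))) := by rw [e4]; ring
      _ = _ := by ring
  rw [h1, MeasureTheory.integral_const_mul,
    integral_comp_mul_left_Ioi
      (fun s => s ^ (α - 1) * ((4 * π * s)⁻¹ * Real.exp (-c / (4 * s)))) 0 two_pos]
  rw [mul_zero, smul_eq_mul, ← mul_assoc]
  congr 1
  rw [← Real.rpow_neg_one 2, ← Real.rpow_add two_pos]
  congr 1; ring
theorem truncated_riesz_potential_bound (α r : ℝ) (hα0 : 0 < α) (hα1 : α < 1) (hr : 0 < r)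
    (z : ℂ) (hz : z ≠ 0) :
    (1 / Real.Gamma α) * ∫ t in (0:ℝ)..(r ^ 2),
        t ^ (α - 1) * ((4 * π * t)⁻¹ * Real.exp (-(‖z‖ ^ 2) / (4 * t))) ≤
      2 ^ (1 - α) * Real.exp (-(‖z‖ ^ 2) / (8 * r ^ 2)) *
        ((1 / Real.Gamma α) * ∫ t in Set.Ioi (0:ℝ),
          t ^ (α - 1) * ((4 * π * t)⁻¹ * Real.exp (-(‖z‖ ^ 2) / (4 * t)))) := by
  have habs : ‖z‖ ≠ 0 := norm_ne_zero_iff.mpr hz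
  set c : ℝ := ‖z‖ ^ 2 with hcdef
  have hc : 0 < c := by rw [hcdef]; exact pow_pos (norm_pos_iff.mpr hz) 2
  have hr2 : (0:ℝ) < r ^ 2 := by positivity
  have hi4 := aux_integrable hα0 hα1 hc (show (0:ℝ) < 4 by norm_num)
  have hi8 := aux_integrable hα0 hα1 hc (show (0:ℝ) < 8 by norm_num)
  have hΓ : 0 < Real.Gamma α := Real.Gamma_pos_of_pos hα0
  rw [intervalIntegral.integral_of_le hr2.le]
  set E : ℝ := Real.exp (-c / (8 * r ^ 2)) with hEdef
  have hE : 0 ≤ E := Real.exp_nonneg _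
  have step1 : (∫ t in Set.Ioc (0:ℝ) (r ^ 2),
        t ^ (α - 1) * ((4 * π * t)⁻¹ * Real.exp (-c / (4 * t)))) ≤
      ∫ t in Set.Ioc (0:ℝ) (r ^ 2),
        E * (t ^ (α - 1) * ((4 * π * t)⁻¹ * Real.exp (-c / (8 * t)))) := by
    refine setIntegral_mono_on (hi4.mono_set Set.Ioc_subset_Ioi_self)
      (IntegrableOn.mono_set (hi8.const_mul E) Set.Ioc_subset_Ioi_self) measurableSet_Ioc
      (fun t ht => ?_)
    have ht0 : (0:ℝ) < t := ht.1
    have ht1 : t ≤ r ^ 2 := ht.2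
    have hdiv : c / (8 * r ^ 2) ≤ c / (8 * t) := by
      apply div_le_div_of_nonneg_left hc.le (by positivity) (by nlinarith)
    have hexp : Real.exp (-c / (4 * t)) ≤ E * Real.exp (-c / (8 * t)) := by
      rw [hEdef, ← Real.exp_add, show -c / (4 * t) = -c / (8 * t) + -c / (8 * t) by
        field_simp; ring]
      exact Real.exp_le_exp.mpr (by linarith [neg_le_neg hdiv,
        (neg_div (8 * t) c), (neg_div (8 * r ^ 2) c)])
    have hnn : 0 ≤ t ^ (α - 1) * (4 * π * t)⁻¹ := by
      have := Real.pi_pos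
      positivity
    calc t ^ (α - 1) * ((4 * π * t)⁻¹ * Real.exp (-c / (4 * t)))
        = (t ^ (α - 1) * (4 * π * t)⁻¹) * Real.exp (-c / (4 * t)) := by ring
      _ ≤ (t ^ (α - 1) * (4 * π * t)⁻¹) * (E * Real.exp (-c / (8 * t))) :=
          mul_le_mul_of_nonneg_left hexp hnn
      _ = E * (t ^ (α - 1) * ((4 * π * t)⁻¹ * Real.exp (-c / (8 * t)))) := by ring
  have step2 : (∫ t in Set.Ioc (0:ℝ) (r ^ 2),
        t ^ (α - 1) * ((4 * π * t)⁻¹ * Real.exp (-c / (8 * t)))) ≤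
      ∫ t in Set.Ioi (0:ℝ), t ^ (α - 1) * ((4 * π * t)⁻¹ * Real.exp (-c / (8 * t))) := by
    refine setIntegral_mono_set hi8 ?_ (HasSubset.Subset.eventuallyLE Set.Ioc_subset_Ioi_self)
    refine (ae_restrict_iff' measurableSet_Ioi).mpr (ae_of_all _ (fun t ht => ?_))
    have ht0 : (0:ℝ) < t := ht
    have := Real.pi_pos
    positivity
  have chain : (∫ t in Set.Ioc (0:ℝ) (r ^ 2),
        t ^ (α - 1) * ((4 * π * t)⁻¹ * Real.exp (-c / (4 * t)))) ≤
      E * (2 ^ (1 - α) *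
        ∫ t in Set.Ioi (0:ℝ), t ^ (α - 1) * ((4 * π * t)⁻¹ * Real.exp (-c / (4 * t)))) := by
    calc (∫ t in Set.Ioc (0:ℝ) (r ^ 2),
          t ^ (α - 1) * ((4 * π * t)⁻¹ * Real.exp (-c / (4 * t))))
        ≤ ∫ t in Set.Ioc (0:ℝ) (r ^ 2),
            E * (t ^ (α - 1) * ((4 * π * t)⁻¹ * Real.exp (-c / (8 * t)))) := step1
      _ = E * ∫ t in Set.Ioc (0:ℝ) (r ^ 2),
            t ^ (α - 1) * ((4 * π * t)⁻¹ * Real.exp (-c / (8 * t))) := integral_const_mul _ _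
      _ ≤ E * ∫ t in Set.Ioi (0:ℝ),
            t ^ (α - 1) * ((4 * π * t)⁻¹ * Real.exp (-c / (8 * t))) :=
          mul_le_mul_of_nonneg_left step2 hE
      _ = E * (2 ^ (1 - α) *
            ∫ t in Set.Ioi (0:ℝ), t ^ (α - 1) * ((4 * π * t)⁻¹ * Real.exp (-c / (4 * t)))) := by
          rw [aux_sub hc]
  have hΓ' : (0:ℝ) ≤ 1 / Real.Gamma α := by positivity
  calc (1 / Real.Gamma α) * ∫ t in Set.Ioc (0:ℝ) (r ^ 2),
        t ^ (α - 1) * ((4 * π * t)⁻¹ * Real.exp (-c / (4 * t)))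
      ≤ (1 / Real.Gamma α) * (E * (2 ^ (1 - α) *
          ∫ t in Set.Ioi (0:ℝ), t ^ (α - 1) * ((4 * π * t)⁻¹ * Real.exp (-c / (4 * t))))) :=
        mul_le_mul_of_nonneg_left chain hΓ'
    _ = 2 ^ (1 - α) * E * ((1 / Real.Gamma α) *
          ∫ t in Set.Ioi (0:ℝ), t ^ (α - 1) * ((4 * π * t)⁻¹ * Real.exp (-c / (4 * t)))) := by
        ring
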